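/- arXiv:2012.05468 — 3 statements merged into one kernel-verified Lean document; each statement's English description precedes it below -/
import Mathlib

section
/- The 3×3 symmetric matrix Q = [[−1, 1/2, 0],[1/2, −k_D, 1/2],[0, 1/2, −1/τ]] with τ > 0 is negative definite if and only if k_D > (1 + τ)/4. -/
open Matrix

lemma Q3_aux (kD τ a b c : ℝ) (hτ : 0 < τ) (hk : kD > (1 + τ) / 4)
    (h : a ≠ 0 ∨ b ≠ 0 ∨ c ≠ 0) :
    -(a^2) + a*b - kD*b^2 + b*c - c^2/τ < 0 := by
  have hτ' : τ ≠ 0 := ne_of_gt hτ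
  have h1 : τ * (-(a^2) + a*b - kD*b^2 + b*c - c^2/τ)
      = -(τ*(a - b/2)^2) - (c - τ*b/2)^2 - (τ*(kD - (1+τ)/4))*b^2 := by
    field_simp; ring
  have h2 : τ * (-(a^2) + a*b - kD*b^2 + b*c - c^2/τ) < 0 := by
    rw [h1]
    by_cases hb : b = 0
    · subst hb
      rcases h with ha | hb0 | hc
      · nlinarith [sq_nonneg c, mul_pos hτ (mul_self_pos.mpr ha)]
      · exact absurd rfl hb0
      · nlinarith [mul_self_pos.mpr hc, mul_nonneg hτ.le (sq_nonneg a)]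
    · nlinarith [sq_nonneg (a - b/2), sq_nonneg (c - τ*b/2),
        mul_pos (mul_pos hτ (by linarith : (0:ℝ) < kD - (1+τ)/4)) (mul_self_pos.mpr hb)]
  nlinarith [h2, mul_pos hτ hτ]

theorem Q3_negdef_iff (kD τ : ℝ) (hτ : 0 < τ) :
    (∀ x : Fin 3 → ℝ, x ≠ 0 →
      x ⬝ᵥ (!![-1, 1/2, 0; 1/2, -kD, 1/2; 0, 1/2, -1/τ] : Matrix (Fin 3) (Fin 3) ℝ).mulVec x < 0)
      ↔ kD > (1 + τ) / 4 := by
  have hτ' : τ ≠ 0 := ne_of_gt hτ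
  constructor
  · intro h
    have hx : (![1/2, 1, τ/2] : Fin 3 → ℝ) ≠ 0 := by
      intro h0
      have := congrFun h0 1
      simp at this
    have hlt := h ![1/2, 1, τ/2] hx
    simp [Matrix.mulVec, dotProduct, Fin.sum_univ_succ] at hlt
    have e : (-1/τ) * (τ/2) = -(1/2) := by field_simp
    rw [e] at hlt
    linarith
  · intro hk x hx
    have hnz : x 0 ≠ 0 ∨ x 1 ≠ 0 ∨ x 2 ≠ 0 := by
      by_contra hc
      push_neg at hc
      apply hx
      funext i
      fin_cases i
      exacts [hc.1, hc.2.1, hc.2.2]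
    have h3 := Q3_aux kD τ (x 0) (x 1) (x 2) hτ hk hnz
    simp [Matrix.mulVec, dotProduct, Fin.sum_univ_succ]
    ring_nf at h3 ⊢
    linarith [h3]
end

section
/- Let V(Γ, ω_e) = k_P(1 − Γ_dᵀΓ) + ½‖ω_e‖² along solutions of the closed-loop system Γ̇ = (Ω_d + Ω_e) × Γ, ω̇_e = (A_skw − k_D I)ω_e, where Ω_d = k_P(Γ × Γ_d), ω_d, ω_e are the planar components with ‖Ω_d‖ = ‖ω_d‖ and Ω_e = R E₂ᵀ ω_e. Then V̇ ≤ −‖ω_d‖² + ‖ω_d‖‖ω_e‖ − k_D‖ω_e‖², and if k_D > 1/4 this upper bound is negative whenever (ω_d, ω_e) ≠ (0,0). -/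
open Matrix

lemma mulVec_dot_swap (A : Matrix (Fin 3) (Fin 3) ℝ) (x y : Fin 3 → ℝ) :
    A.mulVec x ⬝ᵥ y = x ⬝ᵥ Aᵀ.mulVec y := by
  rw [dotProduct_comm, dotProduct_mulVec, ← mulVec_transpose, dotProduct_comm]

lemma triple_prod (a b c : Fin 3 → ℝ) : a ⬝ᵥ (b ⨯₃ c) = b ⬝ᵥ (c ⨯₃ a) := by
  simp [cross_apply, dotProduct, Fin.sum_univ_three]
  ring

lemma dot_self_nonneg {n : ℕ} (v : Fin n → ℝ) : 0 ≤ v ⬝ᵥ v :=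
  Finset.sum_nonneg fun i _ => mul_self_nonneg _

/-- Lyapunov decrease estimate for the structure-preserving controller. -/
theorem lyapunov_decrease_structure_preserving
    (k kP kD : ℝ) (hkP : 0 < kP) (hkD : kD > 1/4)
    (Γd : Fin 3 → ℝ) (hΓd : Γd ⬝ᵥ Γd = 1)
    (Γ : ℝ → Fin 3 → ℝ) (hΓunit : ∀ t, Γ t ⬝ᵥ Γ t = 1)
    (R : ℝ → Matrix (Fin 3) (Fin 3) ℝ)
    (hR : ∀ t, (R t)ᵀ * R t = 1 ∧ (R t).det = 1)
    (hΓR : ∀ t, Γ t = (R t).mulVec ![0, 0, 1])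
    (ωe : ℝ → Fin 2 → ℝ)
    -- planar components and their lifts
    (E₂ : Matrix (Fin 2) (Fin 3) ℝ) (hE₂ : E₂ = !![1, 0, 0; 0, 1, 0])
    (Ωd : ℝ → Fin 3 → ℝ) (hΩd : ∀ t, Ωd t = kP • (Γ t ⨯₃ Γd))
    (ωd : ℝ → Fin 2 → ℝ) (hωd : ∀ t, ωd t = E₂.mulVec ((R t)ᵀ.mulVec (Ωd t)))
    (Ωe : ℝ → Fin 3 → ℝ) (hΩe : ∀ t, Ωe t = (R t).mulVec (E₂ᵀ.mulVec (ωe t)))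
    -- closed-loop dynamics
    (hΓdyn : ∀ t i, HasDerivAt (fun s => Γ s i) (((Ωd t + Ωe t) ⨯₃ Γ t) i) t)
    (hωedyn : ∀ t i, HasDerivAt (fun s => ωe s i)
      (((!![0, -k; k, 0] - kD • (1 : Matrix (Fin 2) (Fin 2) ℝ)).mulVec (ωe t)) i) t) :
    ∀ t, ∃ v : ℝ,
      HasDerivAt (fun s => kP * (1 - Γd ⬝ᵥ Γ s) + (1/2) * (ωe s ⬝ᵥ ωe s)) v t ∧
      v ≤ -(ωd t ⬝ᵥ ωd t) + Real.sqrt (ωd t ⬝ᵥ ωd t) * Real.sqrt (ωe t ⬝ᵥ ωe t)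
            - kD * (ωe t ⬝ᵥ ωe t) ∧
      (¬(ωd t = 0 ∧ ωe t = 0) →
        -(ωd t ⬝ᵥ ωd t) + Real.sqrt (ωd t ⬝ᵥ ωd t) * Real.sqrt (ωe t ⬝ᵥ ωe t)
            - kD * (ωe t ⬝ᵥ ωe t) < 0) := by
  intro t
  -- abbreviations
  set M : Matrix (Fin 2) (Fin 2) ℝ := !![0, -k; k, 0] - kD • (1 : Matrix (Fin 2) (Fin 2) ℝ)
    with hM
  set u : Fin 3 → ℝ := (R t)ᵀ.mulVec (Ωd t) with hu
  have hRt : (R t)ᵀ * R t = 1 := (hR t).1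
  have hRRt : R t * (R t)ᵀ = 1 := mul_eq_one_comm.mp hRt
  -- Γ ⬝ Ωd = 0
  have hΓΩd : Γ t ⬝ᵥ Ωd t = 0 := by
    rw [hΩd]
    simp only [dotProduct, Pi.smul_apply, smul_eq_mul, cross_apply, Fin.sum_univ_three]
    simp [Matrix.cons_val_zero, Matrix.cons_val_one]
    ring
  -- u 2 = 0
  have hu2 : u 2 = 0 := by
    have hΓcoord : ∀ j, Γ t j = R t j 2 := by
      intro j
      rw [hΓR t]
      simp [mulVec, dotProduct, Fin.sum_univ_three]
    have : u 2 = Γ t ⬝ᵥ Ωd t := by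
      simp only [hu, mulVec, dotProduct, transpose_apply, Fin.sum_univ_three, hΓcoord]
    rw [this, hΓΩd]
  -- Ωd ⬝ Ωd = u ⬝ u
  have hOdu : Ωd t ⬝ᵥ Ωd t = u ⬝ᵥ u := by
    rw [hu, dotProduct_comm, dotProduct_mulVec, ← mulVec_transpose, transpose_transpose,
      mulVec_mulVec, hRRt, one_mulVec]
  -- ωd components
  have hωd0 : ωd t 0 = u 0 := by
    rw [hωd t, hE₂, ← hu]; simp [mulVec, dotProduct, Fin.sum_univ_three]
  have hωd1 : ωd t 1 = u 1 := by
    rw [hωd t, hE₂, ← hu]; simp [mulVec, dotProduct, Fin.sum_univ_three]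
  -- ωd ⬝ ωd = Ωd ⬝ Ωd
  have hA : ωd t ⬝ᵥ ωd t = Ωd t ⬝ᵥ Ωd t := by
    rw [hOdu]
    simp only [dotProduct, Fin.sum_univ_two, Fin.sum_univ_three, hωd0, hωd1, hu2]
    ring
  -- Ωe ⬝ Ωd = ωe ⬝ ωd
  have hE : Ωe t ⬝ᵥ Ωd t = ωe t ⬝ᵥ ωd t := by
    rw [hΩe t, mulVec_dot_swap, ← hu]
    simp only [dotProduct, Fin.sum_univ_two, Fin.sum_univ_three, hωd0, hωd1, hE₂,
      mulVec, transpose_apply]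
    simp [dotProduct, Fin.sum_univ_two]
  -- ωe ⬝ (M ωe) = -kD * ωe ⬝ ωe
  have hG : ωe t ⬝ᵥ M.mulVec (ωe t) = -kD * (ωe t ⬝ᵥ ωe t) := by
    simp only [hM, dotProduct, Fin.sum_univ_two, mulVec, Matrix.sub_apply, Matrix.smul_apply,
      one_apply, smul_eq_mul]
    norm_num [Fin.sum_univ_two]
    ring
  -- triple product identity
  have hF : kP * (Γd ⬝ᵥ ((Ωd t + Ωe t) ⨯₃ Γ t)) = (Ωd t + Ωe t) ⬝ᵥ Ωd t := by
    rw [triple_prod, hΩd t]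
    simp only [dotProduct, Pi.smul_apply, smul_eq_mul, Finset.mul_sum]
    congr 1; ext i; ring
  -- derivative of V
  have hd1 : HasDerivAt (fun s => Γd ⬝ᵥ Γ s) (Γd ⬝ᵥ ((Ωd t + Ωe t) ⨯₃ Γ t)) t := by
    simp only [dotProduct]
    exact HasDerivAt.fun_sum fun i _ => (hΓdyn t i).const_mul (Γd i)
  have hd2 : HasDerivAt (fun s => ωe s ⬝ᵥ ωe s) (2 * (ωe t ⬝ᵥ M.mulVec (ωe t))) t := by
    have : HasDerivAt (fun s => ωe s ⬝ᵥ ωe s)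
        (∑ i, (M.mulVec (ωe t) i * ωe t i + ωe t i * M.mulVec (ωe t) i)) t := by
      simp only [dotProduct]
      exact HasDerivAt.fun_sum fun i _ => (hωedyn t i).mul (hωedyn t i)
    convert this using 1
    simp only [dotProduct, Finset.mul_sum]
    congr 1; ext i; ring
  have hdV : HasDerivAt (fun s => kP * (1 - Γd ⬝ᵥ Γ s) + (1/2) * (ωe s ⬝ᵥ ωe s))
      (kP * (0 - Γd ⬝ᵥ ((Ωd t + Ωe t) ⨯₃ Γ t)) + (1/2) * (2 * (ωe t ⬝ᵥ M.mulVec (ωe t)))) t := by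
    exact (((hasDerivAt_const t (1:ℝ)).sub hd1).const_mul kP).add (hd2.const_mul (1/2))
  refine ⟨_, hdV, ?_, ?_⟩
  · -- the bound
    have hv : kP * (0 - Γd ⬝ᵥ ((Ωd t + Ωe t) ⨯₃ Γ t)) + (1/2) * (2 * (ωe t ⬝ᵥ M.mulVec (ωe t)))
        = -(ωd t ⬝ᵥ ωd t) - (ωe t ⬝ᵥ ωd t) - kD * (ωe t ⬝ᵥ ωe t) := by
      have h1 : kP * (Γd ⬝ᵥ ((Ωd t + Ωe t) ⨯₃ Γ t)) = ωd t ⬝ᵥ ωd t + ωe t ⬝ᵥ ωd t := by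
        rw [hF, add_dotProduct, hA, hE]
      rw [hG]
      nlinarith [h1]
    rw [hv]
    have hcs : -(ωe t ⬝ᵥ ωd t) ≤ Real.sqrt (ωd t ⬝ᵥ ωd t) * Real.sqrt (ωe t ⬝ᵥ ωe t) := by
      have hsq : (ωe t ⬝ᵥ ωd t)^2 ≤ (ωd t ⬝ᵥ ωd t) * (ωe t ⬝ᵥ ωe t) := by
        simp only [dotProduct, Fin.sum_univ_two]
        nlinarith [sq_nonneg (ωd t 0 * ωe t 1 - ωd t 1 * ωe t 0)]
      calc -(ωe t ⬝ᵥ ωd t) ≤ |ωe t ⬝ᵥ ωd t| := neg_le_abs _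
        _ = Real.sqrt ((ωe t ⬝ᵥ ωd t)^2) := (Real.sqrt_sq_eq_abs _).symm
        _ ≤ Real.sqrt ((ωd t ⬝ᵥ ωd t) * (ωe t ⬝ᵥ ωe t)) := Real.sqrt_le_sqrt hsq
        _ = _ := Real.sqrt_mul (dot_self_nonneg _) _
    linarith
  · -- negativity
    intro h
    set a := Real.sqrt (ωd t ⬝ᵥ ωd t) with ha
    set b := Real.sqrt (ωe t ⬝ᵥ ωe t) with hb
    have ha2 : a^2 = ωd t ⬝ᵥ ωd t := Real.sq_sqrt (dot_self_nonneg _)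
    have hb2 : b^2 = ωe t ⬝ᵥ ωe t := Real.sq_sqrt (dot_self_nonneg _)
    have hbnn : 0 ≤ b := Real.sqrt_nonneg _
    rcases hbnn.eq_or_lt with hb0 | hb0
    · -- b = 0, so ωe t = 0 and ωd t ≠ 0
      have hB : ωe t ⬝ᵥ ωe t = 0 := by rw [← hb2, ← hb0]; ring
      have hωe0 : ωe t = 0 := dotProduct_self_eq_zero.mp hB
      have hωdne : ωd t ≠ 0 := fun hz => h ⟨hz, hωe0⟩
      have hApos : 0 < ωd t ⬝ᵥ ωd t :=
        lt_of_le_of_ne (dot_self_nonneg _) (fun hz => hωdne (dotProduct_self_eq_zero.mp hz.symm))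
      have hab : a * b = 0 := by rw [← hb0]; ring
      rw [hB]
      linarith
    · -- b > 0
      nlinarith [sq_nonneg (a - b/2), mul_pos (show (0:ℝ) < kD - 1/4 by linarith)
        (mul_pos hb0 hb0), dot_self_nonneg (ωd t), dot_self_nonneg (ωe t)]
end

section
/- If a, b, c ∈ ℝ, τ > 0, and k_D > (1 + τ)/4, then −a² + ab − k_D b² + bc − (1/τ)c² < 0 whenever (a,b,c) ≠ (0,0,0). -/
theorem quadratic_form_negative_actuator (kD τ : ℝ) (hτ : 0 < τ)
    (hkD : kD > (1 + τ) / 4) (a b c : ℝ) (habc : ¬(a = 0 ∧ b = 0 ∧ c = 0)) :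
    -a ^ 2 + a * b - kD * b ^ 2 + b * c - (1 / τ) * c ^ 2 < 0 := by
  have hτ' : 0 < 1 / τ := one_div_pos.mpr hτ
  have hinv : (1 / τ) * τ = 1 := one_div_mul_cancel (ne_of_gt hτ)
  by_cases hb : b = 0
  · subst hb
    by_cases ha : a = 0
    · subst ha
      have hc : c ≠ 0 := by tauto
      have := pow_two_pos_of_ne_zero hc
      nlinarith [mul_pos hτ' this]
    · have := pow_two_pos_of_ne_zero ha
      nlinarith [mul_nonneg hτ'.le (sq_nonneg c)]
  · have hb2 := pow_two_pos_of_ne_zero hb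
    nlinarith [sq_nonneg (2*a - b), mul_nonneg hτ'.le (sq_nonneg (2*c - τ*b)),
      mul_pos hτ hb2]
end
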